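/- arXiv:2110.12933 — 2 statements merged into one kernel-verified Lean document; each statement's English description precedes it below -/
import Mathlib

section
/- Let K be a field, X = {x₁,…,xₙ}, and ⪯ a monomial ordering on ⟨X⟩. Let I be a two-sided ideal of K⟨X⟩ and G its reduced Gröbner basis, i.e., G ⊆ I generates I, for every nonzero f ∈ I there exist g ∈ G and a,b ∈ ⟨X⟩ with lm(f) = a·lm(g)·b, every g ∈ G is monic, and no monomial in supp(g) is of the form a·lm(g')·b for any g' ∈ G \ {g} and a,b ∈ ⟨X⟩. Define ρ(I) := { m·g : m ∈ ⟨X⟩, g ∈ G, and every proper prefix p of m·lm(g) is irreducible modulo lm(G), i.e., p is not of the form a·lm(g')·b with g' ∈ G, a,b ∈ ⟨X⟩ }. Then ρ(I) is a right Gröbner basis of I viewed as a right ideal: ρ(I) right-generates I, and for every nonzero f ∈ I there exist h ∈ ρ(I) and b ∈ ⟨X⟩ with lm(f) = lm(h)·b. Moreover, for every f ∈ ρ(I), lm(f) is not a right multiple lm(f')·b of lm(f') for any f' ∈ ρ(I) \ {f}. -/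
open scoped BigOperators

/-- The two-sided ideal generated by a set `S`, i.e. the set of finite sums
`∑ pᵢ * fᵢ * qᵢ` with `fᵢ ∈ S` and `pᵢ, qᵢ` arbitrary ring elements. -/
def idealSpan {A : Type*} [Semiring A] (S : Set A) : Set A :=
  {x | ∃ (d : ℕ) (p f q : Fin d → A), (∀ i, f i ∈ S) ∧ x = ∑ i, p i * f i * q i}

/-- The right ideal generated by a set `S`, i.e. the set of finite sums `∑ fᵢ * qᵢ`
with `fᵢ ∈ S` and `qᵢ` arbitrary ring elements. -/
def rightIdealSpan {A : Type*} [Semiring A] (S : Set A) : Set A :=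
  {x | ∃ (d : ℕ) (f q : Fin d → A), (∀ i, f i ∈ S) ∧ x = ∑ i, f i * q i}

/-- The leading monomial of `f ∈ K⟨X⟩` with respect to a linear order `ord` on the free
monoid of monomials: the `ord`-largest element of the support of `f` (and `1` if `f = 0`).
Here `K⟨X⟩` is realized as the monoid algebra of the free monoid `⟨X⟩`, so that monomials
form its canonical basis. -/
noncomputable def lm {K : Type*} [Field K] {n : ℕ} (ord : LinearOrder (FreeMonoid (Fin n)))
    (f : MonoidAlgebra K (FreeMonoid (Fin n))) : FreeMonoid (Fin n) :=
  if h : f.coeff.support.Nonempty then @Finset.max' _ ord f.coeff.support h else 1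

section
variable {K : Type*} [Field K] {n : ℕ} (ord : LinearOrder (FreeMonoid (Fin n)))

lemma aux_lm_mem {f : MonoidAlgebra K (FreeMonoid (Fin n))} (hf : f ≠ 0) :
    lm ord f ∈ f.coeff.support := by
  rw [lm, dif_pos (Finsupp.support_nonempty_iff.mpr (mt MonoidAlgebra.coeff_eq_zero.mp hf))]
  exact Finset.max'_mem _ _

lemma aux_le_lm {f : MonoidAlgebra K (FreeMonoid (Fin n))} {m : FreeMonoid (Fin n)}
    (hm : m ∈ f.coeff.support) : ord.le m (lm ord f) := by
  have hf : f.coeff.support.Nonempty := ⟨m, hm⟩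
  rw [lm, dif_pos hf]
  exact Finset.le_max' _ _ hm

lemma aux_lm_eq {f : MonoidAlgebra K (FreeMonoid (Fin n))} {m : FreeMonoid (Fin n)}
    (hm : m ∈ f.coeff.support) (hmax : ∀ s ∈ f.coeff.support, ord.le s m) : lm ord f = m := by
  letI := ord
  exact le_antisymm (hmax _ (aux_lm_mem ord (by rintro rfl; simp at hm)))
    (aux_le_lm ord hm)

lemma aux_single_mul_apply (m s : FreeMonoid (Fin n)) (g : MonoidAlgebra K (FreeMonoid (Fin n))) :
    (MonoidAlgebra.single m (1:K) * g).coeff (m * s) = g.coeff s := by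
  rw [MonoidAlgebra.coeff_single_mul_eq_mul_coeff (m₂ := s), one_mul]
  exact fun a _ => mul_right_inj m

lemma aux_mul_single_apply (b s : FreeMonoid (Fin n)) (c : K)
    (f : MonoidAlgebra K (FreeMonoid (Fin n))) :
    (f * MonoidAlgebra.single b c).coeff (s * b) = f.coeff s * c := by
  exact MonoidAlgebra.coeff_mul_single_eq_coeff_mul s (fun a _ => mul_left_inj b)

lemma aux_support_single_mul (m : FreeMonoid (Fin n)) (g : MonoidAlgebra K (FreeMonoid (Fin n))) :
    (MonoidAlgebra.single m (1:K) * g).coeff.support = g.coeff.support.map (mulLeftEmbedding m) :=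
  MonoidAlgebra.support_coeff_single_mul g 1 (by simp) m

lemma aux_single_mul_ne_zero {g : MonoidAlgebra K (FreeMonoid (Fin n))} (hg : g ≠ 0)
    (m : FreeMonoid (Fin n)) : MonoidAlgebra.single m (1:K) * g ≠ 0 := by
  intro h
  apply hg
  rw [← MonoidAlgebra.coeff_eq_zero, ← Finsupp.support_eq_empty] at h ⊢
  rw [aux_support_single_mul] at h
  simpa using h

lemma aux_lm_single_mul
    (hcomp : ∀ a b m m' : FreeMonoid (Fin n), ord.le m m' → ord.le (a * m * b) (a * m' * b))
    {g : MonoidAlgebra K (FreeMonoid (Fin n))} (hg : g ≠ 0) (m : FreeMonoid (Fin n)) :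
    lm ord (MonoidAlgebra.single m (1:K) * g) = m * lm ord g := by
  apply aux_lm_eq ord
  · rw [aux_support_single_mul]
    exact Finset.mem_map_of_mem _ (aux_lm_mem ord hg)
  · intro s hs
    rw [aux_support_single_mul] at hs
    obtain ⟨t, ht, rfl⟩ := Finset.mem_map.mp hs
    have := hcomp m 1 t (lm ord g) (aux_le_lm ord ht)
    simpa using this

end

section
variable {A : Type*} [Ring A] {S : Set A}

lemma idealSpan_sub {x y : A} (hx : x ∈ idealSpan S) (hy : y ∈ idealSpan S) :
    x - y ∈ idealSpan S := by
  obtain ⟨d1, p1, f1, q1, hf1, rfl⟩ := hx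
  obtain ⟨d2, p2, f2, q2, hf2, rfl⟩ := hy
  refine ⟨d1 + d2, Fin.addCases p1 (fun j => -p2 j), Fin.addCases f1 f2,
    Fin.addCases q1 q2, ?_, ?_⟩
  · intro i
    refine Fin.addCases (fun i => ?_) (fun i => ?_) i <;> simp [hf1, hf2]
  · rw [Fin.sum_univ_add]
    simp [sub_eq_add_neg, ← Finset.sum_neg_distrib]

lemma rightIdealSpan_zero : (0 : A) ∈ rightIdealSpan S :=
  ⟨0, Fin.elim0, Fin.elim0, fun i => i.elim0, by simp⟩

lemma rightIdealSpan_add {x y : A} (hx : x ∈ rightIdealSpan S) (hy : y ∈ rightIdealSpan S) :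
    x + y ∈ rightIdealSpan S := by
  obtain ⟨d1, f1, q1, hf1, rfl⟩ := hx
  obtain ⟨d2, f2, q2, hf2, rfl⟩ := hy
  refine ⟨d1 + d2, Fin.addCases f1 f2, Fin.addCases q1 q2, ?_, ?_⟩
  · intro i
    refine Fin.addCases (fun i => ?_) (fun i => ?_) i <;> simp [hf1, hf2]
  · rw [Fin.sum_univ_add]
    simp

lemma rightIdealSpan_mul_mem {h : A} (hh : h ∈ S) (q : A) : h * q ∈ rightIdealSpan S :=
  ⟨1, fun _ => h, fun _ => q, fun _ => hh, by simp⟩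

end



/-- **`ρ(I)` is a right Gröbner basis of `I`** (specialization of Green's result to the
free algebra).  Let `⪯` be a monomial ordering on `⟨X⟩`, let `I` be the two-sided ideal
generated by its reduced Gröbner basis `G`, and let
`ρ(I) = { m·g : m ∈ ⟨X⟩, g ∈ G`, every proper prefix of `m·lm(g)` is irreducible modulo
`lm(G) }`.  Then `ρ(I)` right-generates `I`, the leading monomial of every nonzero `f ∈ I`
is a right multiple of `lm(h)` for some `h ∈ ρ(I)`, and for every `f ∈ ρ(I)` the leading
monomial `lm(f)` is not a right multiple of `lm(f')` for any `f' ∈ ρ(I) \ {f}`. -/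
theorem rho_is_rightGroebnerBasis (K : Type*) [Field K] (n : ℕ)
    (ord : LinearOrder (FreeMonoid (Fin n)))
    (hwo : WellFounded ord.lt)
    (hcomp : ∀ a b m m' : FreeMonoid (Fin n), ord.le m m' → ord.le (a * m * b) (a * m' * b))
    (G : Set (MonoidAlgebra K (FreeMonoid (Fin n))))
    -- `G` is a Gröbner basis of the ideal `I = (G)` it generates:
    (hGB : ∀ f ∈ idealSpan G, f ≠ 0 →
      ∃ g ∈ G, ∃ a b : FreeMonoid (Fin n), lm ord f = a * lm ord g * b)
    -- `G` is reduced: every element is monic and no monomial in the support of `g ∈ G`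
    -- is a multiple of `lm(g')` for some `g' ∈ G \ {g}`:
    (hmonic : ∀ g ∈ G, g.coeff (lm ord g) = 1)
    (hred : ∀ g ∈ G, ∀ m ∈ g.coeff.support,
      ¬∃ g' ∈ G, g' ≠ g ∧ ∃ a b : FreeMonoid (Fin n), m = a * lm ord g' * b)
    (ρ : Set (MonoidAlgebra K (FreeMonoid (Fin n))))
    (hρ : ρ = {h | ∃ m : FreeMonoid (Fin n), ∃ g ∈ G,
      h = MonoidAlgebra.of K (FreeMonoid (Fin n)) m * g ∧
      ∀ p q : FreeMonoid (Fin n), q ≠ 1 → m * lm ord g = p * q →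
        ¬∃ g' ∈ G, ∃ a b : FreeMonoid (Fin n), p = a * lm ord g' * b}) :
    rightIdealSpan ρ = idealSpan G ∧
      (∀ f ∈ idealSpan G, f ≠ 0 →
        ∃ h ∈ ρ, ∃ b : FreeMonoid (Fin n), lm ord f = lm ord h * b) ∧
      (∀ f ∈ ρ, ¬∃ f' ∈ ρ, f' ≠ f ∧ ∃ b : FreeMonoid (Fin n), lm ord f = lm ord f' * b) := by
  classical
  subst hρ
  set ρ : Set (MonoidAlgebra K (FreeMonoid (Fin n))) := {h | ∃ m : FreeMonoid (Fin n), ∃ g ∈ G,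
      h = MonoidAlgebra.of K (FreeMonoid (Fin n)) m * g ∧
      ∀ p q : FreeMonoid (Fin n), q ≠ 1 → m * lm ord g = p * q →
        ¬∃ g' ∈ G, ∃ a b : FreeMonoid (Fin n), p = a * lm ord g' * b} with hρ
  have hG0 : ∀ g ∈ G, g ≠ 0 := by
    intro g hg h0
    have := hmonic g hg
    rw [h0] at this
    simp at this
  -- Part 2: every nonzero element of the ideal has leading monomial a right
  -- multiple of the leading monomial of an element of ρ.
  have part2 : ∀ f ∈ idealSpan G, f ≠ 0 →
      ∃ h ∈ ρ, ∃ b : FreeMonoid (Fin n), lm ord f = lm ord h * b := by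
    intro f hf hf0
    obtain ⟨g0, hg0, a0, b0, hfac0⟩ := hGB f hf hf0
    set w := lm ord f with hw
    set P : ℕ → Prop := fun l => ∃ g ∈ G, ∃ a b : FreeMonoid (Fin n),
      w = a * lm ord g * b ∧ (FreeMonoid.toList (a * lm ord g)).length = l with hP
    have hPex : ∃ l, P l := ⟨_, g0, hg0, a0, b0, hfac0, rfl⟩
    obtain ⟨g, hg, a, b, hfac, hlen⟩ := Nat.find_spec hPex
    refine ⟨MonoidAlgebra.of K (FreeMonoid (Fin n)) a * g, ⟨a, g, hg, rfl, ?_⟩, b, ?_⟩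
    · rintro p q hq hpq ⟨g', hg', a', b', rfl⟩
      have hlt : (FreeMonoid.toList (a' * lm ord g')).length < Nat.find hPex := by
        have h1 : (FreeMonoid.toList (a * lm ord g)).length
            = (FreeMonoid.toList (a' * lm ord g' * b')).length
              + (FreeMonoid.toList q).length := by
          rw [hpq, FreeMonoid.toList_mul, List.length_append]
        have hq' : (FreeMonoid.toList q).length ≠ 0 := by
          intro h
          exact hq (FreeMonoid.toList.injective (List.length_eq_zero_iff.mp h))
        have h2 : (FreeMonoid.toList (a' * lm ord g')).length
            ≤ (FreeMonoid.toList (a' * lm ord g' * b')).length := by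
          rw [FreeMonoid.toList_mul (a' * lm ord g') b', List.length_append]
          omega
        omega
      have := Nat.find_min hPex hlt
      exact this ⟨g', hg', a', b' * q * b, by
        rw [hfac, hpq]; group, rfl⟩
    · rw [MonoidAlgebra.of_apply, aux_lm_single_mul ord hcomp (hG0 g hg) a, ← hfac]
  -- Part 3
  have part3 : ∀ f ∈ ρ, ¬∃ f' ∈ ρ, f' ≠ f ∧
      ∃ b : FreeMonoid (Fin n), lm ord f = lm ord f' * b := by
    rintro f ⟨m, g, hg, rfl, hpre⟩ ⟨f', ⟨m', g', hg', rfl, hpre'⟩, hne, b, hlmeq⟩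
    rw [MonoidAlgebra.of_apply, MonoidAlgebra.of_apply,
      aux_lm_single_mul ord hcomp (hG0 g hg) m,
      aux_lm_single_mul ord hcomp (hG0 g' hg') m'] at hlmeq
    by_cases hb : b = 1
    · subst hb
      rw [mul_one] at hlmeq
      have hlist : FreeMonoid.toList m ++ FreeMonoid.toList (lm ord g)
          = FreeMonoid.toList m' ++ FreeMonoid.toList (lm ord g') := by
        rw [← FreeMonoid.toList_mul, ← FreeMonoid.toList_mul, hlmeq]
      rcases List.append_eq_append_iff.mp hlist with ⟨t, ht1, ht2⟩ | ⟨t, ht1, ht2⟩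
      · -- m' = m * t, lm g = t * lm g'
        have hm' : m' = m * FreeMonoid.ofList t := FreeMonoid.toList.injective
          (by rw [FreeMonoid.toList_mul]; exact ht1)
        have hlg : lm ord g = FreeMonoid.ofList t * lm ord g' := FreeMonoid.toList.injective
          (by rw [FreeMonoid.toList_mul]; exact ht2)
        by_cases hgg : g' = g
        · subst hgg
          have ht1' : FreeMonoid.ofList t = 1 := by
            have := hlg
            nth_rewrite 1 [← one_mul (lm ord g')] at this
            exact (mul_left_inj _).mp this.symm
          rw [ht1', mul_one] at hm'
          exact hne (by rw [hm']) |>.elim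
        · exact hred g hg (lm ord g) (aux_lm_mem ord (hG0 g hg))
            ⟨g', hg', hgg, FreeMonoid.ofList t, 1, by rw [mul_one]; exact hlg⟩
      · -- m = m' * t, lm g' = t * lm g
        have hm : m = m' * FreeMonoid.ofList t := FreeMonoid.toList.injective
          (by rw [FreeMonoid.toList_mul]; exact ht1)
        have hlg : lm ord g' = FreeMonoid.ofList t * lm ord g := FreeMonoid.toList.injective
          (by rw [FreeMonoid.toList_mul]; exact ht2)
        by_cases hgg : g = g'
        · subst hgg
          have ht1' : FreeMonoid.ofList t = 1 := by
            have := hlg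
            nth_rewrite 1 [← one_mul (lm ord g)] at this
            exact (mul_left_inj _).mp this.symm
          rw [ht1', mul_one] at hm
          exact hne (by rw [hm]) |>.elim
        · exact hred g' hg' (lm ord g') (aux_lm_mem ord (hG0 g' hg'))
            ⟨g, hg, hgg, FreeMonoid.ofList t, 1, by rw [mul_one]; exact hlg⟩
    · exact hpre (m' * lm ord g') b hb (by rw [hlmeq])
        ⟨g', hg', m', 1, by rw [mul_one]⟩
  -- Part 1
  have sub1 : rightIdealSpan ρ ⊆ idealSpan G := by
    rintro x ⟨d, f, q, hfρ, rfl⟩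
    choose m g hgG he _ using hfρ
    refine ⟨d, fun i => MonoidAlgebra.of K (FreeMonoid (Fin n)) (m i), g, q, hgG, ?_⟩
    exact Finset.sum_congr rfl fun i _ => by rw [he i]
  have sub2 : idealSpan G ⊆ rightIdealSpan ρ := by
    have main : ∀ w : FreeMonoid (Fin n), ∀ f ∈ idealSpan G, lm ord f = w →
        f ∈ rightIdealSpan ρ := by
      intro w
      refine hwo.induction (C := fun w => ∀ f ∈ idealSpan G, lm ord f = w →
        f ∈ rightIdealSpan ρ) w ?_
      intro w IH f hf hlmf
      by_cases hf0 : f = 0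
      · subst hf0; exact rightIdealSpan_zero
      obtain ⟨h, hhρ, b, hb⟩ := part2 f hf hf0
      have hhρ' := hhρ
      obtain ⟨m, g, hg, he, -⟩ := hhρ'
      have hgne := hG0 g hg
      have hlmh : lm ord h = m * lm ord g := by
        rw [he, MonoidAlgebra.of_apply]; exact aux_lm_single_mul ord hcomp hgne m
      have hc0 : f.coeff (lm ord f) ≠ 0 := Finsupp.mem_support_iff.mp (aux_lm_mem ord hf0)
      set y := h * MonoidAlgebra.single b (f.coeff (lm ord f)) with hy
      have hysupp : y.coeff.support = h.coeff.support.map (mulRightEmbedding b) :=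
        MonoidAlgebra.support_coeff_mul_single h _ (fun z => by simp [hc0]) b
      have hlc : h.coeff (lm ord h) = 1 := by
        rw [hlmh, he, MonoidAlgebra.of_apply, aux_single_mul_apply]
        exact hmonic g hg
      have hyc : y.coeff (lm ord f) = f.coeff (lm ord f) := by
        conv_lhs => rw [hb]
        rw [hy, aux_mul_single_apply, hlc, one_mul]
      have hyle : ∀ s ∈ y.coeff.support, ord.le s (lm ord f) := by
        intro s hs
        rw [hysupp] at hs
        obtain ⟨u, hu, rfl⟩ := Finset.mem_map.mp hs
        rw [mulRightEmbedding_apply, hb]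
        have := hcomp 1 b u (lm ord h) (aux_le_lm ord hu)
        rwa [one_mul, one_mul] at this
      have hyI : y ∈ idealSpan G := by
        refine ⟨1, fun _ => MonoidAlgebra.single m 1, fun _ => g,
          fun _ => MonoidAlgebra.single b (f.coeff (lm ord f)), fun _ => hg, ?_⟩
        rw [hy, he, MonoidAlgebra.of_apply]
        simp
      have hf'I : f - y ∈ idealSpan G := idealSpan_sub hf hyI
      have hflt : ∀ s ∈ (f - y).coeff.support, ord.lt s (lm ord f) := by
        intro s hs
        have hs0 : f.coeff s - y.coeff s ≠ 0 := by
          simpa [Finsupp.sub_apply] using Finsupp.mem_support_iff.mp hs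
        have hsne : s ≠ lm ord f := by
          rintro rfl
          exact hs0 (by rw [hyc, sub_self])
        have hle : ord.le s (lm ord f) := by
          by_cases hfs : f.coeff s = 0
          · have hys : y.coeff s ≠ 0 := by
              intro h0; rw [hfs, h0, sub_self] at hs0; exact hs0 rfl
            exact hyle s (Finsupp.mem_support_iff.mpr hys)
          · exact aux_le_lm ord (Finsupp.mem_support_iff.mpr hfs)
        exact @lt_of_le_of_ne _ ord.toPartialOrder _ _ hle hsne
      by_cases hf'0 : f - y = 0
      · have hfy : f = y := by rwa [sub_eq_zero] at hf'0
        rw [hfy, hy]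
        exact rightIdealSpan_mul_mem hhρ _
      · have hlt : ord.lt (lm ord (f - y)) w := by
          rw [← hlmf]
          exact hflt _ (aux_lm_mem ord hf'0)
        have hrec := IH _ hlt (f - y) hf'I rfl
        have hfeq : f = (f - y) + y := (sub_add_cancel f y).symm
        rw [hfeq]
        exact rightIdealSpan_add hrec (rightIdealSpan_mul_mem hhρ _)
    intro f hf
    exact main _ f hf rfl
  exact ⟨Set.Subset.antisymm sub1 sub2, part2, part3⟩
end

section
/- Let K be a field, X = {x₁,…,xₙ}, I_ρ a right ideal of K⟨X⟩ with right generating set F, and I_ρ^{φ̄} the right ideal of ℬ = K⟨X,T,T⁻¹⟩/J generated by {φ̄(f) : f ∈ F}. Then the set M := { f ∈ K⟨X⟩ : π(ι(f)) ∈ I_ρ^{φ̄} } is a monomial right ideal of K⟨X⟩: M is a right ideal, and for every f ∈ M, every monomial in supp(f) belongs to M. -/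
open scoped BigOperators

/-- The alphabet `X ∪ T ∪ T⁻¹` with `n` letters `xᵢ`, `n` letters `tᵢ` and `n` letters
`tᵢ⁻¹` (one pair `tᵢ, tᵢ⁻¹` for each `xᵢ`). -/
abbrev XTTn (n : ℕ) := Fin n ⊕ (Fin n ⊕ Fin n)

/-- The relations generating the ideal `J ⊆ K⟨X,T,T⁻¹⟩`: the commutators
`xᵢt_j − t_jxᵢ` (`1 ≤ i,j ≤ n`) and `1 − t_j t_j⁻¹` (`1 ≤ j ≤ n`).  The quotient algebra
`ℬ = K⟨X,T,T⁻¹⟩/J` is `RingQuot (Brel K n)` and the quotient map `π` is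
`RingQuot.mkAlgHom K (Brel K n)`. -/
inductive Brel (K : Type*) [Field K] (n : ℕ) :
    FreeAlgebra K (XTTn n) → FreeAlgebra K (XTTn n) → Prop
  | comm (i j : Fin n) :
      Brel K n (FreeAlgebra.ι K (Sum.inl i) * FreeAlgebra.ι K (Sum.inr (Sum.inl j)))
        (FreeAlgebra.ι K (Sum.inr (Sum.inl j)) * FreeAlgebra.ι K (Sum.inl i))
  | inv (j : Fin n) :
      Brel K n
        (FreeAlgebra.ι K (Sum.inr (Sum.inl j)) * FreeAlgebra.ι K (Sum.inr (Sum.inr j))) 1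

/-- The canonical embedding `ι : K⟨X⟩ → K⟨X,T,T⁻¹⟩`, `xᵢ ↦ xᵢ`. -/
noncomputable def embB (K : Type*) [Field K] (n : ℕ) :
    FreeAlgebra K (Fin n) →ₐ[K] FreeAlgebra K (XTTn n) :=
  FreeAlgebra.lift K fun i => FreeAlgebra.ι K (Sum.inl i)

/-- The algebra homomorphism `φ : K⟨X⟩ → K⟨X,T,T⁻¹⟩`, `xᵢ ↦ xᵢtᵢ`. -/
noncomputable def phiB (K : Type*) [Field K] (n : ℕ) :
    FreeAlgebra K (Fin n) →ₐ[K] FreeAlgebra K (XTTn n) :=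
  FreeAlgebra.lift K fun i =>
    FreeAlgebra.ι K (Sum.inl i) * FreeAlgebra.ι K (Sum.inr (Sum.inl i))

/-- The monomial of `K⟨X⟩` corresponding to a word `w ∈ ⟨X⟩`. -/
noncomputable def monoW (K : Type*) [Field K] {n : ℕ} (w : FreeMonoid (Fin n)) :
    FreeAlgebra K (Fin n) :=
  ((FreeMonoid.toList w).map (FreeAlgebra.ι K)).prod


section Aux

variable {n : ℕ}

abbrev Wrd (n : ℕ) := FreeMonoid (XTTn n)

abbrev xLtr (i : Fin n) : XTTn n := Sum.inl i
abbrev tLtr (i : Fin n) : XTTn n := Sum.inr (Sum.inl i)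
abbrev sLtr (i : Fin n) : XTTn n := Sum.inr (Sum.inr i)

inductive mrel (n : ℕ) : Wrd n → Wrd n → Prop
  | comm (i j : Fin n) : mrel n (FreeMonoid.of (xLtr i) * FreeMonoid.of (tLtr j))
      (FreeMonoid.of (tLtr j) * FreeMonoid.of (xLtr i))
  | inv (j : Fin n) : mrel n (FreeMonoid.of (tLtr j) * FreeMonoid.of (sLtr j)) 1

abbrev Pmon (n : ℕ) := (conGen (mrel n)).Quotient

def clsP : Wrd n →* Pmon n := (conGen (mrel n)).mk'

lemma clsP_rel {a b : Wrd n} (h : mrel n a b) : clsP a = clsP b := by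
  have : (conGen (mrel n)) a b := ConGen.Rel.of _ _ h
  exact (Con.eq _).mpr this

def pLift {G : Type*} [Monoid G] (φ : Wrd n →* G)
    (h1 : ∀ i j, φ (.of (xLtr i) * .of (tLtr j)) = φ (.of (tLtr j) * .of (xLtr i)))
    (h2 : ∀ j, φ (.of (tLtr j) * .of (sLtr j)) = 1) : Pmon n →* G :=
  Con.lift _ φ (Con.conGen_le.mpr (fun x y h => by
    cases h with
    | comm i j => exact (Con.ker_rel φ).mpr (h1 i j)
    | inv j => exact (Con.ker_rel φ).mpr (by simpa using h2 j)))

@[simp] lemma pLift_clsP {G : Type*} [Monoid G] (φ : Wrd n →* G) (h1) (h2) (w : Wrd n) :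
    pLift φ h1 h2 (clsP w) = φ w := Con.lift_mk' _ w

def degLtr : XTTn n → FreeGroup (Fin n)
  | Sum.inl _ => 1
  | Sum.inr (Sum.inl j) => FreeGroup.of j
  | Sum.inr (Sum.inr j) => (FreeGroup.of j)⁻¹

def thLtr : XTTn n → FreeGroup (Fin n)
  | Sum.inl i => FreeGroup.of i
  | Sum.inr _ => 1

def degP : Pmon n →* FreeGroup (Fin n) :=
  pLift (FreeMonoid.lift degLtr)
    (fun i j => by simp [degLtr, xLtr, tLtr])
    (fun j => by simp [degLtr, tLtr, sLtr])

def thP : Pmon n →* FreeGroup (Fin n) :=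
  pLift (FreeMonoid.lift thLtr)
    (fun i j => by simp [thLtr, xLtr, tLtr])
    (fun j => by simp [thLtr, tLtr, sLtr])

def nuP (p : Pmon n) : FreeGroup (Fin n) := (degP p)⁻¹ * thP p

lemma nuP_mul {a : Pmon n} (ha : degP a = thP a) (p : Pmon n) : nuP (a * p) = nuP p := by
  simp [nuP, map_mul, mul_inv_rev, mul_assoc, ha, inv_mul_cancel_left]

def pmX : FreeMonoid (Fin n) →* Pmon n :=
  FreeMonoid.lift fun i => clsP (.of (xLtr i))

def pmPhi : FreeMonoid (Fin n) →* Pmon n :=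
  FreeMonoid.lift fun i => clsP (.of (xLtr i) * .of (tLtr i))

def FGw : FreeMonoid (Fin n) →* FreeGroup (Fin n) := FreeMonoid.lift FreeGroup.of

lemma degP_pmX (w : FreeMonoid (Fin n)) : degP (pmX w) = 1 := by
  have : (degP.comp pmX : FreeMonoid (Fin n) →* FreeGroup (Fin n)) = 1 := by
    apply FreeMonoid.hom_eq
    intro i
    simp [pmX, degP, degLtr, xLtr]
  simpa using DFunLike.congr_fun this w

lemma thP_pmX (w : FreeMonoid (Fin n)) : thP (pmX w) = FGw w := by
  have : (thP.comp pmX : FreeMonoid (Fin n) →* FreeGroup (Fin n)) = FGw := by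
    apply FreeMonoid.hom_eq
    intro i
    simp [pmX, thP, thLtr, xLtr, FGw]
  simpa using DFunLike.congr_fun this w

lemma nuP_pmX (w : FreeMonoid (Fin n)) : nuP (pmX w) = FGw w := by
  simp [nuP, degP_pmX, thP_pmX]

lemma degP_pmPhi (w : FreeMonoid (Fin n)) : degP (pmPhi w) = FGw w := by
  have : (degP.comp pmPhi : FreeMonoid (Fin n) →* FreeGroup (Fin n)) = FGw := by
    apply FreeMonoid.hom_eq
    intro i
    simp [pmPhi, degP, degLtr, xLtr, tLtr, FGw]
  simpa using DFunLike.congr_fun this w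

lemma thP_pmPhi (w : FreeMonoid (Fin n)) : thP (pmPhi w) = FGw w := by
  have : (thP.comp pmPhi : FreeMonoid (Fin n) →* FreeGroup (Fin n)) = FGw := by
    apply FreeMonoid.hom_eq
    intro i
    simp [pmPhi, thP, thLtr, xLtr, tLtr, FGw]
  simpa using DFunLike.congr_fun this w

lemma nuP_pmPhi_mul (u : FreeMonoid (Fin n)) (p : Pmon n) : nuP (pmPhi u * p) = nuP p :=
  nuP_mul (by rw [degP_pmPhi, thP_pmPhi]) p

lemma FGw_eq_mk (w : FreeMonoid (Fin n)) :
    FGw w = FreeGroup.mk (w.toList.map fun i => (i, true)) := by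
  induction w using FreeMonoid.recOn with
  | one =>
      simp [FGw]
      rfl
  | of_mul i w ih =>
      rw [map_mul, ih]
      have h1 : FGw (FreeMonoid.of i) = FreeGroup.mk [(i, true)] := by
        simp [FGw]; rfl
      rw [h1, FreeGroup.mul_mk]
      rfl

lemma reduce_pos (l : List (Fin n)) :
    FreeGroup.reduce (l.map fun i => (i, true)) = l.map fun i => (i, true) := by
  induction l with
  | nil => rfl
  | cons i l ih =>
      rw [List.map_cons, FreeGroup.reduce.cons, ih]
      cases l with
      | nil => rfl
      | cons j l => simp

lemma FGw_inj : Function.Injective (FGw (n := n)) := by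
  intro u v h
  rw [FGw_eq_mk, FGw_eq_mk] at h
  have h2 := congrArg FreeGroup.toWord h
  rw [FreeGroup.toWord_mk, FreeGroup.toWord_mk, reduce_pos, reduce_pos] at h2
  have h3 : u.toList = v.toList := by
    have : Function.Injective (fun i : Fin n => (i, true)) := by
      intro a b hab; simpa using congrArg Prod.fst hab
    exact List.map_injective_iff.mpr this h2
  exact FreeMonoid.toList.injective h3

end Aux

section Alg
variable (K : Type*) [Field K] (n : ℕ)

abbrev Balg := RingQuot (Brel K n)
abbrev Amon := MonoidAlgebra K (Pmon n)

noncomputable def etaA : FreeAlgebra K (XTTn n) →ₐ[K] Amon K n :=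
  FreeAlgebra.lift K fun s => (MonoidAlgebra.of K (Pmon n)) (clsP (.of s))

lemma etaA_rel : ∀ ⦃x y⦄, Brel K n x y → etaA K n x = etaA K n y := by
  intro x y h
  cases h with
  | comm i j =>
      simp only [map_mul, etaA, FreeAlgebra.lift_ι_apply]
      simp only [← map_mul]
      exact congrArg (MonoidAlgebra.of K (Pmon n)) (clsP_rel (mrel.comm i j))
  | inv j =>
      simp only [map_mul, etaA, FreeAlgebra.lift_ι_apply, map_one]
      simp only [← map_mul]
      exact (congrArg (MonoidAlgebra.of K (Pmon n))
        ((clsP_rel (mrel.inv j)).trans (map_one clsP))).trans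
        (map_one (MonoidAlgebra.of K (Pmon n)))

noncomputable def alphaA : Balg K n →ₐ[K] Amon K n :=
  RingQuot.liftAlgHom K ⟨etaA K n, etaA_rel K n⟩

noncomputable def gB : Pmon n →* Balg K n :=
  pLift (FreeMonoid.lift fun s => (RingQuot.mkAlgHom K (Brel K n) (FreeAlgebra.ι K s) : Balg K n))
    (fun i j => by
      simp only [map_mul, FreeMonoid.lift_eval_of]
      simp only [← map_mul]
      exact RingQuot.mkAlgHom_rel K (Brel.comm i j))
    (fun j => by
      simp only [map_mul, FreeMonoid.lift_eval_of]
      simp only [← map_mul]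
      exact (RingQuot.mkAlgHom_rel K (Brel.inv j)).trans (map_one _))

noncomputable def betaA : Amon K n →ₐ[K] Balg K n :=
  MonoidAlgebra.lift K (Balg K n) (Pmon n) (gB K n)

lemma betaA_etaA : (betaA K n).comp (etaA K n) = RingQuot.mkAlgHom K (Brel K n) := by
  apply FreeAlgebra.hom_ext
  funext s
  show betaA K n (etaA K n (FreeAlgebra.ι K s)) = RingQuot.mkAlgHom K (Brel K n) (FreeAlgebra.ι K s)
  rw [etaA, FreeAlgebra.lift_ι_apply]
  rw [betaA, MonoidAlgebra.lift_of]
  rw [gB, pLift_clsP]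
  simp

lemma betaA_alphaA (z : Balg K n) : betaA K n (alphaA K n z) = z := by
  obtain ⟨x, rfl⟩ := RingQuot.mkAlgHom_surjective K (Brel K n) z
  rw [alphaA, RingQuot.liftAlgHom_mkAlgHom_apply]
  exact DFunLike.congr_fun (betaA_etaA K n) x

noncomputable def liftX : MonoidAlgebra K (FreeMonoid (Fin n)) →ₐ[K] Amon K n :=
  MonoidAlgebra.lift K (Amon K n) (FreeMonoid (Fin n))
    ((MonoidAlgebra.of K (Pmon n)).comp pmX)

noncomputable def liftPhi : MonoidAlgebra K (FreeMonoid (Fin n)) →ₐ[K] Amon K n :=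
  MonoidAlgebra.lift K (Amon K n) (FreeMonoid (Fin n))
    ((MonoidAlgebra.of K (Pmon n)).comp pmPhi)

lemma rep_emb (f : FreeAlgebra K (Fin n)) :
    alphaA K n (RingQuot.mkAlgHom K (Brel K n) (embB K n f)) =
      liftX K n (FreeAlgebra.equivMonoidAlgebraFreeMonoid (R := K) f) := by
  have : ((alphaA K n).comp ((RingQuot.mkAlgHom K (Brel K n)).comp (embB K n))) =
      (liftX K n).comp (FreeAlgebra.equivMonoidAlgebraFreeMonoid (R := K)).toAlgHom := by
    apply FreeAlgebra.hom_ext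
    funext i
    show alphaA K n (RingQuot.mkAlgHom K (Brel K n) (embB K n (FreeAlgebra.ι K i))) =
      liftX K n (FreeAlgebra.equivMonoidAlgebraFreeMonoid (R := K) (FreeAlgebra.ι K i))
    rw [embB, FreeAlgebra.lift_ι_apply, alphaA, RingQuot.liftAlgHom_mkAlgHom_apply,
      etaA, FreeAlgebra.lift_ι_apply]
    rw [show (FreeAlgebra.equivMonoidAlgebraFreeMonoid (R := K) (FreeAlgebra.ι K i)) =
      MonoidAlgebra.of K (FreeMonoid (Fin n)) (FreeMonoid.of i) by
        simp [FreeAlgebra.equivMonoidAlgebraFreeMonoid]]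
    rw [liftX, MonoidAlgebra.lift_of]
    simp [pmX]
  exact DFunLike.congr_fun this f

lemma rep_phi (g : FreeAlgebra K (Fin n)) :
    alphaA K n (RingQuot.mkAlgHom K (Brel K n) (phiB K n g)) =
      liftPhi K n (FreeAlgebra.equivMonoidAlgebraFreeMonoid (R := K) g) := by
  have : ((alphaA K n).comp ((RingQuot.mkAlgHom K (Brel K n)).comp (phiB K n))) =
      (liftPhi K n).comp (FreeAlgebra.equivMonoidAlgebraFreeMonoid (R := K)).toAlgHom := by
    apply FreeAlgebra.hom_ext
    funext i
    show alphaA K n (RingQuot.mkAlgHom K (Brel K n) (phiB K n (FreeAlgebra.ι K i))) =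
      liftPhi K n (FreeAlgebra.equivMonoidAlgebraFreeMonoid (R := K) (FreeAlgebra.ι K i))
    rw [phiB, FreeAlgebra.lift_ι_apply, alphaA, RingQuot.liftAlgHom_mkAlgHom_apply]
    rw [map_mul, etaA, FreeAlgebra.lift_ι_apply, FreeAlgebra.lift_ι_apply, ← map_mul, ← map_mul]
    rw [show (FreeAlgebra.equivMonoidAlgebraFreeMonoid (R := K) (FreeAlgebra.ι K i)) =
      MonoidAlgebra.of K (FreeMonoid (Fin n)) (FreeMonoid.of i) by
        simp [FreeAlgebra.equivMonoidAlgebraFreeMonoid]]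
    rw [liftPhi, MonoidAlgebra.lift_of]
    simp [pmPhi]
  exact DFunLike.congr_fun this g

lemma gB_pmX (w : FreeMonoid (Fin n)) :
    gB K n (pmX w) = RingQuot.mkAlgHom K (Brel K n) (embB K n (monoW K w)) := by
  induction w using FreeMonoid.recOn with
  | one =>
      rw [map_one, map_one]
      simp [monoW, map_one]
  | of_mul i w ih =>
      rw [map_mul, map_mul, ih]
      have h1 : monoW K (FreeMonoid.of i * w) = FreeAlgebra.ι K i * monoW K w := by
        simp [monoW]
      rw [h1, map_mul, map_mul]
      congr 1
      rw [pmX, FreeMonoid.lift_eval_of, gB, pLift_clsP, FreeMonoid.lift_eval_of]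
      rw [embB, FreeAlgebra.lift_ι_apply]
end Alg

section Proj

open Classical

variable (K : Type*) [Field K] (n : ℕ)

noncomputable def LamP (w₀ : FreeMonoid (Fin n)) (z : Amon K n) : Amon K n :=
  MonoidAlgebra.ofCoeff (Finsupp.filter (fun p => nuP p = FGw w₀) z.coeff)

lemma LamP_add (w₀ : FreeMonoid (Fin n)) (x y : Amon K n) :
    LamP K n w₀ (x + y) = LamP K n w₀ x + LamP K n w₀ y := by
  simp only [LamP, MonoidAlgebra.coeff_add, Finsupp.filter_add, MonoidAlgebra.ofCoeff_add]

lemma LamP_zero (w₀ : FreeMonoid (Fin n)) : LamP K n w₀ 0 = 0 := by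
  simp only [LamP, MonoidAlgebra.coeff_zero, Finsupp.filter_zero, MonoidAlgebra.ofCoeff_zero]

lemma LamP_single_pos (w₀ : FreeMonoid (Fin n)) {a : Pmon n} (c : K) (h : nuP a = FGw w₀) :
    LamP K n w₀ (MonoidAlgebra.single a c) = MonoidAlgebra.single a c :=
  congrArg MonoidAlgebra.ofCoeff (Finsupp.filter_single_of_pos (p := fun p => nuP p = FGw w₀) h)

lemma LamP_single_neg (w₀ : FreeMonoid (Fin n)) {a : Pmon n} (c : K) (h : ¬ nuP a = FGw w₀) :
    LamP K n w₀ (MonoidAlgebra.single a c) = 0 :=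
  congrArg MonoidAlgebra.ofCoeff (Finsupp.filter_single_of_neg (p := fun p => nuP p = FGw w₀) h)

lemma LamP_key (w₀ : FreeMonoid (Fin n)) {a : Pmon n} (ha : ∀ p, nuP (a * p) = nuP p)
    (c : K) (z : Amon K n) :
    LamP K n w₀ (MonoidAlgebra.single a c * z) =
      MonoidAlgebra.single a c * LamP K n w₀ z := by
  induction z using MonoidAlgebra.induction with
  | zero => simp [LamP_zero]
  | single_add b m z hb hm ih =>
      rw [mul_add, LamP_add, LamP_add, mul_add, ih]
      congr 1
      rw [MonoidAlgebra.single_mul_single]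
      by_cases h : nuP b = FGw w₀
      · rw [LamP_single_pos K n w₀ m h, LamP_single_pos K n w₀ (c*m) (by rw [ha b]; exact h),
          MonoidAlgebra.single_mul_single]
      · rw [LamP_single_neg K n w₀ m h, LamP_single_neg K n w₀ (c*m) (by rw [ha b]; exact h),
          mul_zero]

lemma liftPhi_single (u : FreeMonoid (Fin n)) (c : K) :
    liftPhi K n (MonoidAlgebra.single u c) = MonoidAlgebra.single (pmPhi u) c := by
  rw [liftPhi, MonoidAlgebra.lift_single]
  simp [MonoidAlgebra.of_apply, MonoidAlgebra.smul_single']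

lemma liftX_single (u : FreeMonoid (Fin n)) (c : K) :
    liftX K n (MonoidAlgebra.single u c) = MonoidAlgebra.single (pmX u) c := by
  rw [liftX, MonoidAlgebra.lift_single]
  simp [MonoidAlgebra.of_apply, MonoidAlgebra.smul_single']

lemma LamP_phi_mul (w₀ : FreeMonoid (Fin n)) (y : MonoidAlgebra K (FreeMonoid (Fin n)))
    (z : Amon K n) :
    LamP K n w₀ (liftPhi K n y * z) = liftPhi K n y * LamP K n w₀ z := by
  induction y using MonoidAlgebra.induction with
  | zero => simp [LamP_zero]
  | single_add u c y hu hc ih =>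
      rw [map_add, add_mul, add_mul, LamP_add, ih]
      congr 1
      rw [liftPhi_single]
      exact LamP_key K n w₀ (nuP_pmPhi_mul u) c z

lemma LamP_liftX (w₀ : FreeMonoid (Fin n)) (y : MonoidAlgebra K (FreeMonoid (Fin n))) :
    LamP K n w₀ (liftX K n y) = MonoidAlgebra.single (pmX w₀) (y.coeff w₀) := by
  induction y using MonoidAlgebra.induction with
  | zero => simp [LamP_zero]
  | single_add u c y hu hc ih =>
      rw [map_add, LamP_add, ih, liftX_single]
      by_cases h : u = w₀
      · subst h
        have hy : y.coeff u = 0 := Finsupp.notMem_support_iff.mp hu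
        rw [LamP_single_pos K n u c (nuP_pmX u)]
        simp [Finsupp.add_apply, hy]
      · have hne : ¬ nuP (pmX u) = FGw w₀ := by
          rw [nuP_pmX]
          exact fun hc' => h (FGw_inj hc')
        rw [LamP_single_neg K n w₀ c hne]
        simp [Finsupp.add_apply, Finsupp.single_apply, if_neg h]

end Proj

section Proj2
variable (K : Type*) [Field K] (n : ℕ)

lemma LamP_sum {ι : Type*} (w₀ : FreeMonoid (Fin n)) (s : Finset ι) (g : ι → Amon K n) :
    LamP K n w₀ (∑ i ∈ s, g i) = ∑ i ∈ s, LamP K n w₀ (g i) := by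
  classical
  induction s using Finset.induction with
  | empty => simp [LamP_zero]
  | insert a s hns ih => rw [Finset.sum_insert hns, Finset.sum_insert hns, LamP_add, ih]

end Proj2


/-- **The contraction `M = { f ∈ K⟨X⟩ : π(ι(f)) ∈ I_ρ^{φ̄} }` is a monomial right ideal.**
Here `I_ρ^{φ̄}` is the right ideal of `ℬ = K⟨X,T,T⁻¹⟩/J` generated by `{φ̄(f) : f ∈ F}`.
The set `M` is a right ideal of `K⟨X⟩` (it contains `0` and is closed under addition and
under right multiplication by arbitrary elements), and for every `f ∈ M` every monomial in
the support of `f` (computed via the identification of `K⟨X⟩` with the monoid algebra of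
the free monoid `⟨X⟩`) again belongs to `M`. -/
theorem contraction_is_monomial_rightIdeal (K : Type*) [Field K] (n : ℕ)
    (F : Set (FreeAlgebra K (Fin n)))
    (M : Set (FreeAlgebra K (Fin n)))
    (hM : M = {f | RingQuot.mkAlgHom K (Brel K n) (embB K n f) ∈
      rightIdealSpan ((fun g => RingQuot.mkAlgHom K (Brel K n) (phiB K n g)) '' F)}) :
    (0 : FreeAlgebra K (Fin n)) ∈ M ∧
      (∀ f ∈ M, ∀ g ∈ M, f + g ∈ M) ∧
      (∀ f ∈ M, ∀ q : FreeAlgebra K (Fin n), f * q ∈ M) ∧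
      (∀ f ∈ M, ∀ w ∈ (FreeAlgebra.equivMonoidAlgebraFreeMonoid (R := K) f).coeff.support,
        monoW K w ∈ M) := by
  subst hM
  refine ⟨?_, ?_, ?_, ?_⟩
  · exact ⟨0, Fin.elim0, Fin.elim0, fun i => i.elim0, by simp⟩
  · rintro f ⟨d1, f1, q1, hf1, he1⟩ g ⟨d2, f2, q2, hf2, he2⟩
    refine ⟨d1 + d2, Fin.addCases f1 f2, Fin.addCases q1 q2, ?_, ?_⟩
    · intro i
      refine Fin.addCases (motive := fun i => Fin.addCases f1 f2 i ∈ ((fun g => RingQuot.mkAlgHom K (Brel K n) (phiB K n g)) '' F)) ?_ ?_ i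
      · intro j; simpa using hf1 j
      · intro j; simpa using hf2 j
    · rw [map_add, map_add, he1, he2, Fin.sum_univ_add]
      simp
  · rintro f ⟨d, fi, qi, hfi, he⟩ q
    refine ⟨d, fi, fun i => qi i * RingQuot.mkAlgHom K (Brel K n) (embB K n q), hfi, ?_⟩
    rw [map_mul, map_mul, he, Finset.sum_mul]
    simp [mul_assoc]
  · rintro f ⟨d, fi, qi, hfi, he⟩ w hw
    set c : K := (FreeAlgebra.equivMonoidAlgebraFreeMonoid (R := K) f).coeff w with hc
    have hc0 : c ≠ 0 := Finsupp.mem_support_iff.mp hw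
    choose g hgF hgeq using fun i => hfi i
    have heq2 := congrArg (alphaA K n) he
    rw [map_sum] at heq2
    simp_rw [map_mul] at heq2
    have heq3 := congrArg (LamP K n w) heq2
    rw [rep_emb, LamP_liftX, LamP_sum] at heq3
    have hterm : ∀ i, LamP K n w (alphaA K n (fi i) * alphaA K n (qi i)) =
        alphaA K n (fi i) * LamP K n w (alphaA K n (qi i)) := by
      intro i
      rw [← hgeq i, rep_phi, LamP_phi_mul]
    simp_rw [hterm] at heq3
    have heq4 := congrArg (betaA K n) heq3
    rw [map_sum] at heq4
    simp_rw [map_mul, betaA_alphaA] at heq4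
    have hL : betaA K n (MonoidAlgebra.single (pmX w) c) =
        c • RingQuot.mkAlgHom K (Brel K n) (embB K n (monoW K w)) := by
      rw [← gB_pmX]
      have h1 : MonoidAlgebra.single (pmX w) c =
          c • (MonoidAlgebra.of K (Pmon n) (pmX w)) := by
        simp [MonoidAlgebra.of_apply, MonoidAlgebra.smul_single']
      rw [h1, map_smul, betaA, MonoidAlgebra.lift_of]
    rw [hL] at heq4
    refine ⟨d, fi, fun i => c⁻¹ • betaA K n (LamP K n w (alphaA K n (qi i))), hfi, ?_⟩
    calc RingQuot.mkAlgHom K (Brel K n) (embB K n (monoW K w))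
        = c⁻¹ • (c • RingQuot.mkAlgHom K (Brel K n) (embB K n (monoW K w))) := by
          rw [smul_smul, inv_mul_cancel₀ hc0, one_smul]
      _ = c⁻¹ • ∑ i, fi i * betaA K n (LamP K n w (alphaA K n (qi i))) := by rw [heq4]
      _ = ∑ i, fi i * (c⁻¹ • betaA K n (LamP K n w (alphaA K n (qi i)))) := by
          rw [Finset.smul_sum]
          exact Finset.sum_congr rfl fun i _ => (mul_smul_comm _ _ _).symm
end
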